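/- Let γ : I → ℝ² be a C² curve on an open interval and define z(u,v) = det[γ(u), γ(v)] + ∫ᵥᵘ det[γ(k), γ′(k)]dk on I × I. Let D ⊆ I × I be an open set on which det[γ′(u), γ′(v)] ≠ 0 and on which the map Φ(u,v) = γ(u) + γ(v) is injective. Then Φ is a C¹-diffeomorphism of D onto the open set Φ(D) ⊆ ℝ², the function ψ = z ∘ Φ⁻¹ is C² on Φ(D), and ψ satisfies the hyperbolic Monge–Ampère equation (∂_x²ψ)(∂_y²ψ) − (∂_x∂_yψ)² = −1 at every point of Φ(D). -/

import Mathlib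

def det2 (a b : ℝ × ℝ) : ℝ := a.1 * b.2 - a.2 * b.1

noncomputable def pdx (f : ℝ × ℝ → ℝ) (p : ℝ × ℝ) : ℝ :=
  deriv (fun x => f (x, p.2)) p.1

noncomputable def pdy (f : ℝ × ℝ → ℝ) (p : ℝ × ℝ) : ℝ :=
  deriv (fun y => f (p.1, y)) p.2

noncomputable def rowCLM (s t : ℝ) : ℝ × ℝ →L[ℝ] ℝ :=
  s • ContinuousLinearMap.fst ℝ ℝ ℝ + t • ContinuousLinearMap.snd ℝ ℝ ℝ

@[simp] lemma rowCLM_apply (s t : ℝ) (x : ℝ × ℝ) : rowCLM s t x = s * x.1 + t * x.2 := by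
  simp [rowCLM]

noncomputable def colsCLE (c d : ℝ × ℝ) (hw : det2 c d ≠ 0) : (ℝ × ℝ) ≃L[ℝ] (ℝ × ℝ) :=
  ContinuousLinearEquiv.equivOfInverse
    ((rowCLM c.1 d.1).prod (rowCLM c.2 d.2))
    ((rowCLM (d.2 / det2 c d) (-(d.1 / det2 c d))).prod
      (rowCLM (-(c.2 / det2 c d)) (c.1 / det2 c d)))
    (by
      intro x
      have hw' := hw
      simp only [det2] at hw' ⊢
      have hw'' : d.2 * c.1 - c.2 * d.1 ≠ 0 := by intro h; apply hw'; linarith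
      ext <;> simp <;> field_simp <;> ring)
    (by
      intro x
      have hw' := hw
      simp only [det2] at hw' ⊢
      have hw'' : d.2 * c.1 - c.2 * d.1 ≠ 0 := by intro h; apply hw'; linarith
      ext <;> simp <;> field_simp <;> ring)

@[simp] lemma colsCLE_apply (c d : ℝ × ℝ) (hw : det2 c d ≠ 0) (x : ℝ × ℝ) :
    colsCLE c d hw x = (c.1 * x.1 + d.1 * x.2, c.2 * x.1 + d.2 * x.2) := by
  simp [colsCLE]

@[simp] lemma colsCLE_symm_apply (c d : ℝ × ℝ) (hw : det2 c d ≠ 0) (x : ℝ × ℝ) :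
    (colsCLE c d hw).symm x
      = ((x.1 * d.2 - x.2 * d.1) / det2 c d, (x.2 * c.1 - x.1 * c.2) / det2 c d) := by
  simp [colsCLE, ContinuousLinearEquiv.symm_equivOfInverse]
  constructor <;> ring

lemma pdx_of_hasFDerivAt {F : ℝ × ℝ → ℝ} {L : ℝ × ℝ →L[ℝ] ℝ} {q : ℝ × ℝ}
    (h : HasFDerivAt F L q) : pdx F q = L (1, 0) := by
  have hι : HasDerivAt (fun x : ℝ => (x, q.2)) ((1 : ℝ), (0 : ℝ)) q.1 :=
    (hasDerivAt_id _).prodMk (hasDerivAt_const _ _)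
  have h' : HasFDerivAt F L ((q.1, q.2)) := by simpa using h
  exact (h'.comp_hasDerivAt q.1 hι).deriv

lemma pdy_of_hasFDerivAt {F : ℝ × ℝ → ℝ} {L : ℝ × ℝ →L[ℝ] ℝ} {q : ℝ × ℝ}
    (h : HasFDerivAt F L q) : pdy F q = L (0, 1) := by
  have hι : HasDerivAt (fun y : ℝ => (q.1, y)) ((0 : ℝ), (1 : ℝ)) q.2 :=
    (hasDerivAt_const _ _).prodMk (hasDerivAt_id _)
  have h' : HasFDerivAt F L ((q.1, q.2)) := by simpa using h
  exact (h'.comp_hasDerivAt q.2 hι).deriv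

theorem stmt7 (I : Set ℝ) (hI : IsOpen I) (hIc : I.OrdConnected)
    (γ : ℝ → ℝ × ℝ) (hγ : ContDiffOn ℝ 2 γ I)
    (z : ℝ × ℝ → ℝ)
    (hz : ∀ p : ℝ × ℝ, z p = det2 (γ p.1) (γ p.2)
      + ∫ k in p.2..p.1, det2 (γ k) (deriv γ k))
    (Φ : ℝ × ℝ → ℝ × ℝ) (hΦ : ∀ p : ℝ × ℝ, Φ p = γ p.1 + γ p.2)
    (D : Set (ℝ × ℝ)) (hD : IsOpen D) (hDI : D ⊆ I ×ˢ I)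
    (hjac : ∀ p ∈ D, det2 (deriv γ p.1) (deriv γ p.2) ≠ 0)
    (hinj : Set.InjOn Φ D) :
    IsOpen (Φ '' D) ∧
    ∃ Φinv : ℝ × ℝ → ℝ × ℝ,
      Set.LeftInvOn Φinv Φ D ∧ Set.RightInvOn Φinv Φ (Φ '' D) ∧
      ContDiffOn ℝ 1 Φinv (Φ '' D) ∧
      ContDiffOn ℝ 2 (z ∘ Φinv) (Φ '' D) ∧
      ∀ p ∈ Φ '' D,
        pdx (pdx (z ∘ Φinv)) p * pdy (pdy (z ∘ Φinv)) p
          - (pdx (pdy (z ∘ Φinv)) p) ^ 2 = -1 := by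
  classical
  have hII : IsOpen (I ×ˢ I) := hI.prod hI
  -- basic differentiability of γ
  have hγd : ∀ t ∈ I, HasDerivAt γ (deriv γ t) t := fun t ht =>
    ((hγ.differentiableOn (by norm_num)).differentiableAt (hI.mem_nhds ht)).hasDerivAt
  have hγ'c1 : ContDiffOn ℝ 1 (deriv γ) I := hγ.deriv_of_isOpen hI (by norm_num)
  have hγ'cont : ContinuousOn (deriv γ) I := hγ'c1.continuousOn
  have hγcont : ContinuousOn γ I := hγ.continuousOn
  have had : ∀ t ∈ I, HasDerivAt (fun s => (γ s).1) ((deriv γ t).1) t := fun t ht =>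
    (ContinuousLinearMap.fst ℝ ℝ ℝ).hasFDerivAt.comp_hasDerivAt t (hγd t ht)
  have hbd : ∀ t ∈ I, HasDerivAt (fun s => (γ s).2) ((deriv γ t).2) t := fun t ht =>
    (ContinuousLinearMap.snd ℝ ℝ ℝ).hasFDerivAt.comp_hasDerivAt t (hγd t ht)
  -- the integrand
  set f : ℝ → ℝ := fun k => det2 (γ k) (deriv γ k) with hfdef
  have hfcont : ContinuousOn f I := by
    have h1 : ContinuousOn (fun k => (γ k).1) I := continuous_fst.comp_continuousOn hγcont
    have h2 : ContinuousOn (fun k => (γ k).2) I := continuous_snd.comp_continuousOn hγcont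
    have h3 : ContinuousOn (fun k => (deriv γ k).1) I := continuous_fst.comp_continuousOn hγ'cont
    have h4 : ContinuousOn (fun k => (deriv γ k).2) I := continuous_snd.comp_continuousOn hγ'cont
    exact (h1.mul h4).sub (h2.mul h3)
  have hfint : ∀ s ∈ I, ∀ t ∈ I, IntervalIntegrable f MeasureTheory.volume s t :=
    fun s hs t ht => (hfcont.mono (hIc.uIcc_subset hs ht)).intervalIntegrable
  -- Φ is C²
  have hΦeq : Φ = fun q : ℝ × ℝ => γ q.1 + γ q.2 := funext hΦ
  have hΦcd : ContDiffOn ℝ 2 Φ (I ×ˢ I) := by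
    rw [hΦeq]
    exact (hγ.comp contDiff_fst.contDiffOn fun q hq => hq.1).add
      (hγ.comp contDiff_snd.contDiffOn fun q hq => hq.2)
  -- derivative of Φ
  have hΦd : ∀ p (hp : p ∈ D),
      HasFDerivAt Φ ((colsCLE (deriv γ p.1) (deriv γ p.2) (hjac p hp) :
        (ℝ × ℝ) ≃L[ℝ] (ℝ × ℝ)) : (ℝ × ℝ) →L[ℝ] (ℝ × ℝ)) p := by
    intro p hp
    have hu : p.1 ∈ I := (hDI hp).1
    have hv : p.2 ∈ I := (hDI hp).2
    have h1 := ((hγd _ hu).hasFDerivAt).comp p hasFDerivAt_fst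
    have h2 := ((hγd _ hv).hasFDerivAt).comp p hasFDerivAt_snd
    rw [hΦeq]
    refine (h1.add h2).congr_fderiv ?_
    refine ContinuousLinearMap.ext fun x => Prod.ext ?_ ?_ <;> simp <;> ring
  have hΦs : ∀ p (hp : p ∈ D),
      HasStrictFDerivAt Φ ((colsCLE (deriv γ p.1) (deriv γ p.2) (hjac p hp) :
        (ℝ × ℝ) ≃L[ℝ] (ℝ × ℝ)) : (ℝ × ℝ) →L[ℝ] (ℝ × ℝ)) p := fun p hp =>
    (hΦcd.contDiffAt (hII.mem_nhds (hDI hp))).hasStrictFDerivAt' (hΦd p hp) (by norm_num)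
  -- openness of the image
  have hopen : IsOpen (Φ '' D) := by
    rw [isOpen_iff_mem_nhds]
    rintro q ⟨p, hp, rfl⟩
    rw [← (hΦs p hp).map_nhds_eq_of_equiv]
    exact Filter.image_mem_map (hD.mem_nhds hp)
  refine ⟨hopen, ?_⟩
  set Φinv : ℝ × ℝ → ℝ × ℝ := Function.invFunOn Φ D with hΦinvdef
  have hleft : Set.LeftInvOn Φinv Φ D := hinj.leftInvOn_invFunOn
  have hright : Set.RightInvOn Φinv Φ (Φ '' D) := fun q hq => Function.invFunOn_eq (by
    obtain ⟨p, hp, rfl⟩ := hq; exact ⟨p, hp, rfl⟩)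
  have hmemD : ∀ q ∈ Φ '' D, Φinv q ∈ D := fun q hq => Function.invFunOn_mem (by
    obtain ⟨p, hp, rfl⟩ := hq; exact ⟨p, hp, rfl⟩)
  -- Φinv agrees with the local inverse near each point of the image
  have hev : ∀ p (hp : p ∈ D),
      Φinv =ᶠ[nhds (Φ p)] (hΦs p hp).localInverse Φ _ p := by
    intro p hp
    have h1 : ∀ᶠ y in nhds (Φ p), Φ ((hΦs p hp).localInverse Φ _ p y) = y :=
      (hΦs p hp).eventually_right_inverse
    have h2 : ∀ᶠ y in nhds (Φ p), (hΦs p hp).localInverse Φ _ p y ∈ D := by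
      have hc : ContinuousAt ((hΦs p hp).localInverse Φ _ p) (Φ p) :=
        (hΦs p hp).localInverse_continuousAt
      have : (hΦs p hp).localInverse Φ _ p (Φ p) = p :=
        (hΦs p hp).localInverse_apply_image
      exact hc.preimage_mem_nhds (by rw [this]; exact hD.mem_nhds hp)
    have h3 : ∀ᶠ y in nhds (Φ p), y ∈ Φ '' D := hopen.mem_nhds ⟨p, hp, rfl⟩
    filter_upwards [h1, h2, h3] with y hy1 hy2 hy3
    exact hinj (hmemD y hy3) hy2 (by rw [hright hy3, hy1])
  have hinvd : ∀ p (hp : p ∈ D),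
      HasFDerivAt Φinv
        (((colsCLE (deriv γ p.1) (deriv γ p.2) (hjac p hp)).symm :
          (ℝ × ℝ) ≃L[ℝ] (ℝ × ℝ)) : (ℝ × ℝ) →L[ℝ] (ℝ × ℝ)) (Φ p) := fun p hp =>
    ((hΦs p hp).to_localInverse.hasFDerivAt).congr_of_eventuallyEq (hev p hp)
  have hinvcd : ContDiffOn ℝ 1 Φinv (Φ '' D) := by
    rintro q ⟨p, hp, rfl⟩
    have hca : ContDiffAt ℝ 2 ((hΦs p hp).localInverse Φ _ p) (Φ p) := by
      exact (hΦcd.contDiffAt (hII.mem_nhds (hDI hp))).to_localInverse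
        (hf' := hΦd p hp) (hn := by norm_num)
    exact ((hca.of_le (by norm_num)).congr_of_eventuallyEq (hev p hp)).contDiffWithinAt
  -- derivative of z
  have hzd : ∀ p (hp : p ∈ D),
      HasFDerivAt z (rowCLM
        (det2 (deriv γ p.1) (γ p.2) + det2 (γ p.1) (deriv γ p.1))
        (det2 (γ p.1) (deriv γ p.2) - det2 (γ p.2) (deriv γ p.2))) p := by
    intro p hp
    have hu : p.1 ∈ I := (hDI hp).1
    have hv : p.2 ∈ I := (hDI hp).2
    set F1 : ℝ → ℝ := fun t => ∫ k in p.1..t, f k with hF1def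
    have hevz : z =ᶠ[nhds p] fun q =>
        (γ q.1).1 * (γ q.2).2 - (γ q.1).2 * (γ q.2).1 + (F1 q.1 - F1 q.2) := by
      filter_upwards [hII.mem_nhds (hDI hp)] with q hq
      have h5 : F1 q.1 - F1 q.2 = ∫ k in q.2..q.1, f k :=
        intervalIntegral.integral_interval_sub_left (hfint _ hu _ hq.1) (hfint _ hu _ hq.2)
      rw [hz q, ← h5]
      simp [det2]
    have hF1u : HasDerivAt F1 (f p.1) p.1 :=
      intervalIntegral.integral_hasDerivAt_right (hfint _ hu _ hu)
        (hfcont.stronglyMeasurableAtFilter hI _ hu) (hfcont.continuousAt (hI.mem_nhds hu))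
    have hF1v : HasDerivAt F1 (f p.2) p.2 :=
      intervalIntegral.integral_hasDerivAt_right (hfint _ hu _ hv)
        (hfcont.stronglyMeasurableAtFilter hI _ hv) (hfcont.continuousAt (hI.mem_nhds hv))
    have hA : HasFDerivAt (fun q : ℝ × ℝ => (γ q.1).1)
        ((deriv γ p.1).1 • ContinuousLinearMap.fst ℝ ℝ ℝ) p :=
      HasDerivAt.comp_hasFDerivAt p (had _ hu) hasFDerivAt_fst
    have hB : HasFDerivAt (fun q : ℝ × ℝ => (γ q.1).2)
        ((deriv γ p.1).2 • ContinuousLinearMap.fst ℝ ℝ ℝ) p :=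
      HasDerivAt.comp_hasFDerivAt p (hbd _ hu) hasFDerivAt_fst
    have hC : HasFDerivAt (fun q : ℝ × ℝ => (γ q.2).1)
        ((deriv γ p.2).1 • ContinuousLinearMap.snd ℝ ℝ ℝ) p :=
      HasDerivAt.comp_hasFDerivAt p (had _ hv) hasFDerivAt_snd
    have hDd : HasFDerivAt (fun q : ℝ × ℝ => (γ q.2).2)
        ((deriv γ p.2).2 • ContinuousLinearMap.snd ℝ ℝ ℝ) p :=
      HasDerivAt.comp_hasFDerivAt p (hbd _ hv) hasFDerivAt_snd
    have hE : HasFDerivAt (fun q : ℝ × ℝ => F1 q.1)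
        ((f p.1) • ContinuousLinearMap.fst ℝ ℝ ℝ) p :=
      HasDerivAt.comp_hasFDerivAt p hF1u hasFDerivAt_fst
    have hF : HasFDerivAt (fun q : ℝ × ℝ => F1 q.2)
        ((f p.2) • ContinuousLinearMap.snd ℝ ℝ ℝ) p :=
      HasDerivAt.comp_hasFDerivAt p hF1v hasFDerivAt_snd
    refine HasFDerivAt.congr_of_eventuallyEq ?_ hevz
    refine (((hA.mul hDd).sub (hB.mul hC)).add (hE.sub hF)).congr_fderiv ?_
    refine ContinuousLinearMap.ext fun x => ?_
    simp [det2, hfdef]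
    ring
  -- the gradient functions
  set w1 : ℝ × ℝ → ℝ := fun q => (γ (Φinv q).2).2 - (γ (Φinv q).1).2 with hw1def
  set w2 : ℝ × ℝ → ℝ := fun q => (γ (Φinv q).1).1 - (γ (Φinv q).2).1 with hw2def
  set ψ : ℝ × ℝ → ℝ := z ∘ Φinv with hψdef
  have hψd' : ∀ p (hp : p ∈ D), HasFDerivAt (z ∘ Φinv)
      (rowCLM ((γ p.2).2 - (γ p.1).2) ((γ p.1).1 - (γ p.2).1)) (Φ p) := by
    intro p hp
    have h0 : Φinv (Φ p) = p := hleft hp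
    have hz' : HasFDerivAt z (rowCLM
        (det2 (deriv γ p.1) (γ p.2) + det2 (γ p.1) (deriv γ p.1))
        (det2 (γ p.1) (deriv γ p.2) - det2 (γ p.2) (deriv γ p.2))) (Φinv (Φ p)) := by
      rw [h0]; exact hzd p hp
    have hcomp := hz'.comp (Φ p) (hinvd p hp)
    have hw := hjac p hp
    have hCLM : (rowCLM
        (det2 (deriv γ p.1) (γ p.2) + det2 (γ p.1) (deriv γ p.1))
        (det2 (γ p.1) (deriv γ p.2) - det2 (γ p.2) (deriv γ p.2))).comp
          (((colsCLE (deriv γ p.1) (deriv γ p.2) hw).symm :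
            (ℝ × ℝ) ≃L[ℝ] (ℝ × ℝ)) : (ℝ × ℝ) →L[ℝ] (ℝ × ℝ))
        = rowCLM ((γ p.2).2 - (γ p.1).2) ((γ p.1).1 - (γ p.2).1) := by
      refine ContinuousLinearMap.ext fun x => ?_
      simp only [ContinuousLinearMap.coe_comp', Function.comp_apply,
        ContinuousLinearEquiv.coe_coe, colsCLE_symm_apply, rowCLM_apply]
      simp only [det2] at hw ⊢
      field_simp
      ring
    rw [← hCLM]
    exact hcomp
  have hψd : ∀ q ∈ Φ '' D, HasFDerivAt ψ (rowCLM (w1 q) (w2 q)) q := by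
    rintro q ⟨p, hp, rfl⟩
    have h0 : Φinv (Φ p) = p := hleft hp
    simpa only [hψdef, hw1def, hw2def, h0] using hψd' p hp
  have hψdiff : DifferentiableOn ℝ ψ (Φ '' D) := fun q hq =>
    (hψd q hq).differentiableAt.differentiableWithinAt
  have hgcd1 : ContDiffOn ℝ 1 (fun q : ℝ × ℝ => (γ q.2).2 - (γ q.1).2) (I ×ˢ I) := by
    have h1 : ContDiffOn ℝ 1 (fun q : ℝ × ℝ => (γ q.2).2) (I ×ˢ I) :=
      contDiff_snd.comp_contDiffOn ((hγ.of_le (by norm_num)).comp contDiff_snd.contDiffOn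
        fun q hq => hq.2)
    have h2 : ContDiffOn ℝ 1 (fun q : ℝ × ℝ => (γ q.1).2) (I ×ˢ I) :=
      contDiff_snd.comp_contDiffOn ((hγ.of_le (by norm_num)).comp contDiff_fst.contDiffOn
        fun q hq => hq.1)
    exact h1.sub h2
  have hgcd2 : ContDiffOn ℝ 1 (fun q : ℝ × ℝ => (γ q.1).1 - (γ q.2).1) (I ×ˢ I) := by
    have h1 : ContDiffOn ℝ 1 (fun q : ℝ × ℝ => (γ q.1).1) (I ×ˢ I) :=
      contDiff_fst.comp_contDiffOn ((hγ.of_le (by norm_num)).comp contDiff_fst.contDiffOn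
        fun q hq => hq.1)
    have h2 : ContDiffOn ℝ 1 (fun q : ℝ × ℝ => (γ q.2).1) (I ×ˢ I) :=
      contDiff_fst.comp_contDiffOn ((hγ.of_le (by norm_num)).comp contDiff_snd.contDiffOn
        fun q hq => hq.2)
    exact h1.sub h2
  have hmapsto : Set.MapsTo Φinv (Φ '' D) (I ×ˢ I) := fun q hq => hDI (hmemD q hq)
  have hw1cd : ContDiffOn ℝ 1 w1 (Φ '' D) := hgcd1.comp hinvcd hmapsto
  have hw2cd : ContDiffOn ℝ 1 w2 (Φ '' D) := hgcd2.comp hinvcd hmapsto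
  have hψc2 : ContDiffOn ℝ 2 ψ (Φ '' D) := by
    have h2 : (2 : WithTop ℕ∞) = 1 + 1 := by norm_num
    rw [h2, contDiffOn_succ_iff_fderiv_of_isOpen hopen]
    refine ⟨hψdiff, by simp, ?_⟩
    have : ContDiffOn ℝ 1 (fun q => rowCLM (w1 q) (w2 q)) (Φ '' D) := by
      simp only [rowCLM]
      exact (hw1cd.smul contDiffOn_const).add (hw2cd.smul contDiffOn_const)
    exact this.congr fun q hq => (hψd q hq).fderiv
  -- first partials
  have hpdx1 : ∀ q ∈ Φ '' D, pdx ψ q = w1 q := by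
    intro q hq
    rw [pdx_of_hasFDerivAt (hψd q hq)]
    simp
  have hpdy1 : ∀ q ∈ Φ '' D, pdy ψ q = w2 q := by
    intro q hq
    rw [pdy_of_hasFDerivAt (hψd q hq)]
    simp
  refine ⟨Φinv, hleft, hright, hinvcd, hψc2, ?_⟩
  rintro q ⟨p, hp, rfl⟩
  set q := Φ p with hqdef
  have hq : q ∈ Φ '' D := ⟨p, hp, rfl⟩
  have h0 : Φinv q = p := hleft hp
  have hu : p.1 ∈ I := (hDI hp).1
  have hv : p.2 ∈ I := (hDI hp).2
  have hw := hjac p hp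
  -- derivatives of w1, w2
  have hg1d : HasFDerivAt (fun q' : ℝ × ℝ => (γ q'.2).2 - (γ q'.1).2)
      (rowCLM (-(deriv γ p.1).2) ((deriv γ p.2).2)) p := by
    have h1 : HasFDerivAt (fun q' : ℝ × ℝ => (γ q'.2).2)
        ((deriv γ p.2).2 • ContinuousLinearMap.snd ℝ ℝ ℝ) p :=
      HasDerivAt.comp_hasFDerivAt p (hbd _ hv) hasFDerivAt_snd
    have h2 : HasFDerivAt (fun q' : ℝ × ℝ => (γ q'.1).2)
        ((deriv γ p.1).2 • ContinuousLinearMap.fst ℝ ℝ ℝ) p :=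
      HasDerivAt.comp_hasFDerivAt p (hbd _ hu) hasFDerivAt_fst
    refine (h1.sub h2).congr_fderiv ?_
    refine ContinuousLinearMap.ext fun x => ?_
    simp
    ring
  have hg2d : HasFDerivAt (fun q' : ℝ × ℝ => (γ q'.1).1 - (γ q'.2).1)
      (rowCLM ((deriv γ p.1).1) (-(deriv γ p.2).1)) p := by
    have h1 : HasFDerivAt (fun q' : ℝ × ℝ => (γ q'.1).1)
        ((deriv γ p.1).1 • ContinuousLinearMap.fst ℝ ℝ ℝ) p :=
      HasDerivAt.comp_hasFDerivAt p (had _ hu) hasFDerivAt_fst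
    have h2 : HasFDerivAt (fun q' : ℝ × ℝ => (γ q'.2).1)
        ((deriv γ p.2).1 • ContinuousLinearMap.snd ℝ ℝ ℝ) p :=
      HasDerivAt.comp_hasFDerivAt p (had _ hv) hasFDerivAt_snd
    refine (h1.sub h2).congr_fderiv ?_
    refine ContinuousLinearMap.ext fun x => ?_
    simp
    ring
  have hw1d : HasFDerivAt w1
      ((rowCLM (-(deriv γ p.1).2) ((deriv γ p.2).2)).comp
        (((colsCLE (deriv γ p.1) (deriv γ p.2) hw).symm :
          (ℝ × ℝ) ≃L[ℝ] (ℝ × ℝ)) : (ℝ × ℝ) →L[ℝ] (ℝ × ℝ))) q := by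
    have hg1d' : HasFDerivAt (fun q' : ℝ × ℝ => (γ q'.2).2 - (γ q'.1).2)
        (rowCLM (-(deriv γ p.1).2) ((deriv γ p.2).2)) (Φinv q) := by rw [h0]; exact hg1d
    exact hg1d'.comp q (hinvd p hp)
  have hw2d : HasFDerivAt w2
      ((rowCLM ((deriv γ p.1).1) (-(deriv γ p.2).1)).comp
        (((colsCLE (deriv γ p.1) (deriv γ p.2) hw).symm :
          (ℝ × ℝ) ≃L[ℝ] (ℝ × ℝ)) : (ℝ × ℝ) →L[ℝ] (ℝ × ℝ))) q := by
    have hg2d' : HasFDerivAt (fun q' : ℝ × ℝ => (γ q'.1).1 - (γ q'.2).1)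
        (rowCLM ((deriv γ p.1).1) (-(deriv γ p.2).1)) (Φinv q) := by rw [h0]; exact hg2d
    exact hg2d'.comp q (hinvd p hp)
  -- second partials via eventual equality
  have hxnh : {x : ℝ | (x, q.2) ∈ Φ '' D} ∈ nhds q.1 := by
    have hc : Continuous fun x : ℝ => (x, q.2) := continuous_id.prodMk continuous_const
    have : (q.1, q.2) ∈ Φ '' D := by simpa using hq
    exact hc.continuousAt.preimage_mem_nhds (hopen.mem_nhds this)
  have hynh : {y : ℝ | (q.1, y) ∈ Φ '' D} ∈ nhds q.2 := by
    have hc : Continuous fun y : ℝ => (q.1, y) := continuous_const.prodMk continuous_id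
    have : (q.1, q.2) ∈ Φ '' D := by simpa using hq
    exact hc.continuousAt.preimage_mem_nhds (hopen.mem_nhds this)
  have hpdxx : pdx (pdx ψ) q = pdx w1 q := by
    unfold pdx
    apply Filter.EventuallyEq.deriv_eq
    filter_upwards [hxnh] with x hx
    exact hpdx1 _ hx
  have hpdyy : pdy (pdy ψ) q = pdy w2 q := by
    unfold pdy
    apply Filter.EventuallyEq.deriv_eq
    filter_upwards [hynh] with y hy
    exact hpdy1 _ hy
  have hpdxy : pdx (pdy ψ) q = pdx w2 q := by
    unfold pdx pdy
    apply Filter.EventuallyEq.deriv_eq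
    filter_upwards [hxnh] with x hx
    exact hpdy1 _ hx
  rw [hpdxx, hpdyy, hpdxy]
  rw [pdx_of_hasFDerivAt hw1d, pdy_of_hasFDerivAt hw2d, pdx_of_hasFDerivAt hw2d]
  simp only [ContinuousLinearMap.coe_comp', Function.comp_apply,
    ContinuousLinearEquiv.coe_coe, colsCLE_symm_apply, rowCLM_apply]
  simp only [det2] at hw ⊢
  have hw2 : (deriv γ p.2).2 * (deriv γ p.1).1 - (deriv γ p.1).2 * (deriv γ p.2).1 ≠ 0 := by
    intro h; apply hw; linarith
  field_simp
  ring
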